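/- arXiv:0903.0430 — 3 statements merged into one kernel-verified Lean document; each statement's English description precedes it below -/
import Mathlib

section
/- The function c¹(λ) defined piecewise by c¹(λ) = g(O_1) for 0 < λ < λ_1 and c¹(λ) = min{g(O_2), min{c ∈ [g(O_1), g(O_2)] : M_{12}(c) = λ}} for λ ≥ λ_1, where λ_1 = M_{12}(g(O_1)), is non-decreasing in λ, provided M_{12}: [g(O_1), g(O_2)] → ℝ is continuous. -/
open Classical in
/-- The function `c¹(λ)`: equal to `g(O₁)` for `λ < λ₁ = M₁₂(g(O₁))`, and for
`λ ≥ λ₁` equal to `min{g(O₂), min{c ∈ [g(O₁), g(O₂)] : M₁₂(c) = λ}}`, with the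
convention `c¹(λ) = g(O₂)` if the level set is empty. -/
noncomputable def cOne (g₁ g₂ : ℝ) (M : ℝ → ℝ) (lam : ℝ) : ℝ :=
  if lam < M g₁ then g₁
  else if ({c | c ∈ Set.Icc g₁ g₂ ∧ M c = lam}).Nonempty then
    min g₂ (sInf {c | c ∈ Set.Icc g₁ g₂ ∧ M c = lam})
  else g₂

/-- If `M₁₂` is continuous on `[g(O₁), g(O₂)]`, then `c¹` is non-decreasing. -/
theorem cOne_monotone (g₁ g₂ : ℝ) (hg : g₁ ≤ g₂) (M : ℝ → ℝ)
    (hM : ContinuousOn M (Set.Icc g₁ g₂)) :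
    ∀ lam mu : ℝ, 0 < lam → lam ≤ mu → cOne g₁ g₂ M lam ≤ cOne g₁ g₂ M mu := by
  intro lam mu _ hle
  unfold cOne
  by_cases h1 : lam < M g₁
  · rw [if_pos h1]
    split_ifs with h2 h3
    · exact le_refl g₁
    · refine le_min hg (le_csInf h3 (fun x hx => hx.1.1))
    · exact hg
  · have hMg1 : M g₁ ≤ lam := not_lt.1 h1
    have hmu1 : ¬ mu < M g₁ := not_lt.2 (hMg1.trans hle)
    rw [if_neg h1, if_neg hmu1]
    by_cases hSmu : ({c | c ∈ Set.Icc g₁ g₂ ∧ M c = mu}).Nonempty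
    · obtain ⟨d, hd, hMd⟩ := hSmu
      have hIVT : ∀ e ∈ Set.Icc g₁ g₂, M e = mu → ∃ c ∈ Set.Icc g₁ e, M c = lam := by
        intro e he hMe
        have hsub : Set.Icc g₁ e ⊆ Set.Icc g₁ g₂ := Set.Icc_subset_Icc le_rfl he.2
        have hmem : lam ∈ Set.Icc (M g₁) (M e) := ⟨hMg1, hMe ▸ hle⟩
        obtain ⟨c, hc, hMc⟩ := intermediate_value_Icc he.1 (hM.mono hsub) hmem
        exact ⟨c, hc, hMc⟩
      obtain ⟨c, hc, hMc⟩ := hIVT d hd hMd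
      have hSlam : ({c | c ∈ Set.Icc g₁ g₂ ∧ M c = lam}).Nonempty :=
        ⟨c, ⟨⟨hc.1, hc.2.trans hd.2⟩, hMc⟩⟩
      rw [if_pos hSlam, if_pos ⟨d, hd, hMd⟩]
      refine min_le_min le_rfl ?_
      refine le_csInf ⟨d, hd, hMd⟩ ?_
      rintro e ⟨he, hMe⟩
      obtain ⟨c', hc', hMc'⟩ := hIVT e he hMe
      calc sInf {c | c ∈ Set.Icc g₁ g₂ ∧ M c = lam}
          ≤ c' := csInf_le ⟨g₁, fun x hx => hx.1.1⟩ ⟨⟨hc'.1, hc'.2.trans he.2⟩, hMc'⟩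
        _ ≤ e := hc'.2
    · rw [if_neg hSmu]
      split_ifs with hSlam
      · exact min_le_left _ _
      · exact le_rfl
end

section
/- The function c²(λ) defined by c²(λ) = g(O_2) for 0 < λ < λ_2 and c²(λ) = max{g(O_1), max{c ∈ [g(O_1), g(O_2)] : M_{21}(c) = λ}} for λ ≥ λ_2, where λ_2 = M_{21}(g(O_2)), is non-increasing in λ, provided M_{21}: [g(O_1), g(O_2)] → ℝ is continuous. -/
open Classical in
/-- The function `c²(λ)`: equal to `g(O₂)` for `λ < λ₂ = M₂₁(g(O₂))`, and for
`λ ≥ λ₂` equal to `max{g(O₁), max{c ∈ [g(O₁), g(O₂)] : M₂₁(c) = λ}}`, with the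
convention `c²(λ) = g(O₁)` if the level set is empty. -/
noncomputable def cTwo (g₁ g₂ : ℝ) (M : ℝ → ℝ) (lam : ℝ) : ℝ :=
  if lam < M g₂ then g₂
  else if ({c | c ∈ Set.Icc g₁ g₂ ∧ M c = lam}).Nonempty then
    max g₁ (sSup {c | c ∈ Set.Icc g₁ g₂ ∧ M c = lam})
  else g₁

/-- If `M₂₁` is continuous on `[g(O₁), g(O₂)]`, then `c²` is non-increasing. -/
theorem cTwo_antitone (g₁ g₂ : ℝ) (hg : g₁ ≤ g₂) (M : ℝ → ℝ)
    (hM : ContinuousOn M (Set.Icc g₁ g₂)) :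
    ∀ lam mu : ℝ, 0 < lam → lam ≤ mu → cTwo g₁ g₂ M mu ≤ cTwo g₁ g₂ M lam := by
  intro lam mu _hlam hle
  have hbdd : ∀ l : ℝ, BddAbove {c | c ∈ Set.Icc g₁ g₂ ∧ M c = l} :=
    fun l => ⟨g₂, fun x hx => hx.1.2⟩
  have hsup_le : ∀ l : ℝ, ({c | c ∈ Set.Icc g₁ g₂ ∧ M c = l}).Nonempty →
      sSup {c | c ∈ Set.Icc g₁ g₂ ∧ M c = l} ≤ g₂ :=
    fun l hne => csSup_le hne (fun x hx => hx.1.2)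
  unfold cTwo
  by_cases h1 : mu < M g₂
  · have h2 : lam < M g₂ := lt_of_le_of_lt hle h1
    rw [if_pos h1, if_pos h2]
  · by_cases h2 : lam < M g₂
    · rw [if_neg h1, if_pos h2]
      by_cases hne : ({c | c ∈ Set.Icc g₁ g₂ ∧ M c = mu}).Nonempty
      · rw [if_pos hne]; exact max_le hg (hsup_le mu hne)
      · rw [if_neg hne]; exact hg
    · rw [if_neg h1, if_neg h2]
      push_neg at h1 h2
      by_cases hne : ({c | c ∈ Set.Icc g₁ g₂ ∧ M c = mu}).Nonempty
      · have key : ∀ c ∈ {c | c ∈ Set.Icc g₁ g₂ ∧ M c = mu},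
            ∃ d ∈ {c | c ∈ Set.Icc g₁ g₂ ∧ M c = lam}, c ≤ d := by
          intro c hc
          have hc1 : c ∈ Set.Icc g₁ g₂ := hc.1
          have hsub : Set.Icc c g₂ ⊆ Set.Icc g₁ g₂ := Set.Icc_subset_Icc hc1.1 le_rfl
          have hiv := intermediate_value_Icc' hc1.2 (hM.mono hsub)
          have hmem : lam ∈ Set.Icc (M g₂) (M c) := ⟨h2, hc.2 ▸ hle⟩
          obtain ⟨d, hd, hdl⟩ := hiv hmem
          exact ⟨d, ⟨⟨hc1.1.trans hd.1, hd.2⟩, hdl⟩, hd.1⟩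
        have hneL : ({c | c ∈ Set.Icc g₁ g₂ ∧ M c = lam}).Nonempty := by
          obtain ⟨c, hc⟩ := hne
          obtain ⟨d, hd, _⟩ := key c hc
          exact ⟨d, hd⟩
        rw [if_pos hne, if_pos hneL]
        apply max_le_max le_rfl
        apply csSup_le hne
        intro c hc
        obtain ⟨d, hd, hcd⟩ := key c hc
        exact hcd.trans (le_csSup (hbdd lam) hd)
      · rw [if_neg hne]
        by_cases hneL : ({c | c ∈ Set.Icc g₁ g₂ ∧ M c = lam}).Nonempty
        · rw [if_pos hneL]; exact le_max_left _ _
        · rw [if_neg hneL]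
end

section
/- Under the assumptions that the level sets of a continuous function M: [α, β] → ℝ at value λ are compact, the function λ ↦ min{β, min(M^{-1}(λ))} (defined as β when M^{-1}(λ) ∩ [α, β] = ∅) has left and right one-sided limits at every point where M has finitely many critical points, i.e., it is a regulated function on any interval avoiding the finite set of critical values of M. -/
open Set Filter

namespace LevelMinAux

/-- `G β M a b lam = sInf ({c ∈ [a,b] | M c = lam} ∪ {β})`. -/
noncomputable def G (β : ℝ) (M : ℝ → ℝ) (a b lam : ℝ) : ℝ :=
  sInf ({c | c ∈ Set.Icc a b ∧ M c = lam} ∪ {β})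

variable {β : ℝ} {M : ℝ → ℝ}

lemma bddBelow_aux (β : ℝ) (M : ℝ → ℝ) (a b lam : ℝ) :
    BddBelow ({c | c ∈ Set.Icc a b ∧ M c = lam} ∪ {β}) := by
  refine ⟨min a β, ?_⟩
  rintro y (⟨⟨h1, _⟩, _⟩ | rfl)
  · exact (min_le_left _ _).trans h1
  · exact min_le_right _ _

lemma nonempty_aux (β : ℝ) (M : ℝ → ℝ) (a b lam : ℝ) :
    ({c | c ∈ Set.Icc a b ∧ M c = lam} ∪ {β}).Nonempty :=
  ⟨β, Or.inr rfl⟩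

lemma G_le (a b lam : ℝ) : G β M a b lam ≤ β :=
  csInf_le (bddBelow_aux β M a b lam) (Or.inr rfl)

lemma le_G (a b lam : ℝ) : min a β ≤ G β M a b lam := by
  refine le_csInf (nonempty_aux β M a b lam) ?_
  rintro y (⟨⟨h1, _⟩, _⟩ | rfl)
  · exact (min_le_left _ _).trans h1
  · exact min_le_right _ _

lemma G_split {a c b : ℝ} (hac : a ≤ c) (hcb : c ≤ b) (lam : ℝ) :
    G β M a b lam = min (G β M a c lam) (G β M c b lam) := by
  have hset : {x | x ∈ Set.Icc a b ∧ M x = lam} ∪ {β} =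
      ({x | x ∈ Set.Icc a c ∧ M x = lam} ∪ {β}) ∪
      ({x | x ∈ Set.Icc c b ∧ M x = lam} ∪ {β}) := by
    ext x
    simp only [Set.mem_union, Set.mem_setOf_eq, Set.mem_singleton_iff,
      ← Set.Icc_union_Icc_eq_Icc hac hcb]
    tauto
  rw [G, hset, csInf_union (bddBelow_aux β M a c lam) (nonempty_aux β M a c lam)
    (bddBelow_aux β M c b lam) (nonempty_aux β M c b lam)]
  rfl

lemma G_monoOn {a b p q : ℝ} (hab : a ≤ b) (hcont : ContinuousOn M (Set.Icc a b))
    (hmono : MonotoneOn M (Set.Icc a b)) (hMa : M a ∉ Set.Ioo p q) :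
    MonotoneOn (G β M a b) (Set.Ioo p q) := by
  intro l1 h1 l2 h2 hle
  refine le_csInf (nonempty_aux β M a b l2) ?_
  rintro y (⟨hy, hMy⟩ | rfl)
  · have ha : a ∈ Set.Icc a b := ⟨le_rfl, hab⟩
    have hMay : M a ≤ M y := hmono ha hy hy.1
    have hMa_le : M a ≤ l1 := by
      by_contra h
      push_neg at h
      exact hMa ⟨h1.1.trans h, lt_of_le_of_lt (hMay.trans_eq hMy) h2.2⟩
    have hl1 : l1 ∈ Set.Icc (M a) (M y) := ⟨hMa_le, hMy ▸ hle⟩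
    obtain ⟨x, hx, hMx⟩ :=
      intermediate_value_Icc hy.1 (hcont.mono (Set.Icc_subset_Icc_right hy.2)) hl1
    exact (csInf_le (bddBelow_aux β M a b l1)
      (Or.inl ⟨⟨hx.1, hx.2.trans hy.2⟩, hMx⟩)).trans hx.2
  · exact G_le a b l1

lemma G_antiOn {a b p q : ℝ} (hab : a ≤ b) (hcont : ContinuousOn M (Set.Icc a b))
    (hanti : AntitoneOn M (Set.Icc a b)) (hMa : M a ∉ Set.Ioo p q) :
    AntitoneOn (G β M a b) (Set.Ioo p q) := by
  intro l1 h1 l2 h2 hle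
  refine le_csInf (nonempty_aux β M a b l1) ?_
  rintro y (⟨hy, hMy⟩ | rfl)
  · have ha : a ∈ Set.Icc a b := ⟨le_rfl, hab⟩
    have hMya : M y ≤ M a := hanti ha hy hy.1
    have hl1Ma : l1 ≤ M a := hMy ▸ hMya
    have hMa_ge : l2 ≤ M a := by
      by_contra h
      push_neg at h
      exact hMa ⟨h1.1.trans_le hl1Ma, h.trans h2.2⟩
    have hl2 : l2 ∈ Set.Icc (M y) (M a) := ⟨hMy ▸ hle, hMa_ge⟩
    obtain ⟨x, hx, hMx⟩ :=
      intermediate_value_Icc' hy.1 (hcont.mono (Set.Icc_subset_Icc_right hy.2)) hl2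
    exact (csInf_le (bddBelow_aux β M a b l2)
      (Or.inl ⟨⟨hx.1, hx.2.trans hy.2⟩, hMx⟩)).trans hx.2
  · exact G_le a b l2

/-- Base case: no critical points in the open interval. -/
lemma base {a b : ℝ} (hab : a ≤ b) (hM : ContDiff ℝ 1 M)
    (hne : ∀ x ∈ Set.Ioo a b, deriv M x ≠ 0) (lam : ℝ) :
    (∃ L : ℝ, Filter.Tendsto (G β M a b) (nhdsWithin lam (Set.Iio lam)) (nhds L)) ∧
    (∃ L : ℝ, Filter.Tendsto (G β M a b) (nhdsWithin lam (Set.Ioi lam)) (nhds L)) := by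
  have hcont : ContinuousOn M (Set.Icc a b) := hM.continuous.continuousOn
  have hdc : Continuous (deriv M) := hM.continuous_deriv le_rfl
  -- constant sign of the derivative on `Ioo a b`
  have hsign : (∀ x ∈ Set.Ioo a b, 0 < deriv M x) ∨ (∀ x ∈ Set.Ioo a b, deriv M x < 0) := by
    by_contra h
    push_neg at h
    obtain ⟨⟨x, hx, hx0⟩, ⟨y, hy, hy0⟩⟩ := h
    have hx' : deriv M x < 0 := lt_of_le_of_ne hx0 (hne x hx)
    have hy' : 0 < deriv M y := lt_of_le_of_ne hy0 (Ne.symm (hne y hy))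
    rcases le_total x y with hxy | hxy
    · obtain ⟨z, hz, hz0⟩ := intermediate_value_Icc hxy hdc.continuousOn ⟨hx'.le, hy'.le⟩
      exact hne z ⟨hx.1.trans_le hz.1, lt_of_le_of_lt hz.2 hy.2⟩ hz0
    · obtain ⟨z, hz, hz0⟩ := intermediate_value_Icc' hxy hdc.continuousOn ⟨hx'.le, hy'.le⟩
      exact hne z ⟨hy.1.trans_le hz.1, lt_of_le_of_lt hz.2 hx.2⟩ hz0
  have hMM : MonotoneOn M (Set.Icc a b) ∨ AntitoneOn M (Set.Icc a b) := by
    rcases hsign with h | h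
    · exact Or.inl (strictMonoOn_of_deriv_pos (convex_Icc a b) hcont
        (by rwa [interior_Icc])).monotoneOn
    · exact Or.inr (strictAntiOn_of_deriv_neg (convex_Icc a b) hcont
        (by rwa [interior_Icc])).antitoneOn
  obtain ⟨p, hp, hMaL⟩ : ∃ p, p < lam ∧ M a ∉ Set.Ioo p lam := by
    rcases lt_or_ge (M a) lam with h | h
    · exact ⟨M a, h, fun hc => lt_irrefl _ hc.1⟩
    · exact ⟨lam - 1, by linarith, fun hc => absurd hc.2 (not_lt.2 h)⟩
  obtain ⟨q, hq, hMaR⟩ : ∃ q, lam < q ∧ M a ∉ Set.Ioo lam q := by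
    rcases lt_or_ge lam (M a) with h | h
    · exact ⟨M a, h, fun hc => lt_irrefl _ hc.2⟩
    · exact ⟨lam + 1, by linarith, fun hc => absurd hc.1 (not_lt.2 h)⟩
  have hbddAL : BddAbove (G β M a b '' Set.Ioo p lam) := by
    refine ⟨β, ?_⟩; rintro y ⟨x, -, rfl⟩; exact G_le a b x
  have hbddBL : BddBelow (G β M a b '' Set.Ioo p lam) := by
    refine ⟨min a β, ?_⟩; rintro y ⟨x, -, rfl⟩; exact le_G a b x
  have hbddAR : BddAbove (G β M a b '' Set.Ioo lam q) := by
    refine ⟨β, ?_⟩; rintro y ⟨x, -, rfl⟩; exact G_le a b x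
  have hbddBR : BddBelow (G β M a b '' Set.Ioo lam q) := by
    refine ⟨min a β, ?_⟩; rintro y ⟨x, -, rfl⟩; exact le_G a b x
  constructor
  · rcases hMM with hm | hm
    · exact ⟨_, (G_monoOn hab hcont hm hMaL).tendsto_nhdsWithin_Ioo_left
        (Set.nonempty_Ioo.2 hp) hbddAL⟩
    · exact ⟨_, (G_antiOn hab hcont hm hMaL).tendsto_nhdsWithin_Ioo_left
        (Set.nonempty_Ioo.2 hp) hbddBL⟩
  · rcases hMM with hm | hm
    · exact ⟨_, (G_monoOn hab hcont hm hMaR).tendsto_nhdsWithin_Ioo_right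
        (Set.nonempty_Ioo.2 hq) hbddBR⟩
    · exact ⟨_, (G_antiOn hab hcont hm hMaR).tendsto_nhdsWithin_Ioo_right
        (Set.nonempty_Ioo.2 hq) hbddAR⟩

end LevelMinAux

open Classical in
/-- `F(λ) = min{β, min(M⁻¹(λ) ∩ [α,β])}`, defined as `β` when the level set is
empty. -/
noncomputable def levelMin (α β : ℝ) (M : ℝ → ℝ) (lam : ℝ) : ℝ :=
  if ({c | c ∈ Set.Icc α β ∧ M c = lam}).Nonempty then
    min β (sInf {c | c ∈ Set.Icc α β ∧ M c = lam})
  else β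

lemma levelMin_eq_G (α β : ℝ) (M : ℝ → ℝ) (lam : ℝ) :
    levelMin α β M lam = LevelMinAux.G β M α β lam := by
  classical
  by_cases h : ({c | c ∈ Set.Icc α β ∧ M c = lam}).Nonempty
  · have hbdd : BddBelow {c | c ∈ Set.Icc α β ∧ M c = lam} :=
      ⟨α, fun x hx => hx.1.1⟩
    rw [levelMin, if_pos h, LevelMinAux.G,
      csInf_union hbdd h bddBelow_singleton (Set.singleton_nonempty β), csInf_singleton]
    exact min_comm _ _
  · rw [levelMin, if_neg h, LevelMinAux.G, Set.not_nonempty_iff_eq_empty.1 h,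
      Set.empty_union, csInf_singleton]

/-- If `M : [α,β] → ℝ` is `C¹` with finitely many critical points, then the
function `λ ↦ min{β, min M⁻¹(λ)}` has one-sided (left and right) limits at
every `λ` that is not a critical value of `M`; i.e., it is regulated on any
interval avoiding the finitely many critical values. -/
theorem levelMin_regulated
    (α β : ℝ) (hab : α ≤ β) (M : ℝ → ℝ)
    (hM : ContDiff ℝ 1 M)
    (hcrit : ({c | c ∈ Set.Icc α β ∧ deriv M c = 0}).Finite) :
    ∀ lam : ℝ, lam ∉ M '' {c | c ∈ Set.Icc α β ∧ deriv M c = 0} →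
      (∃ L : ℝ, Filter.Tendsto (levelMin α β M)
          (nhdsWithin lam (Set.Iio lam)) (nhds L)) ∧
      (∃ L : ℝ, Filter.Tendsto (levelMin α β M)
          (nhdsWithin lam (Set.Ioi lam)) (nhds L)) := by
  classical
  intro lam _
  have key : ∀ n : ℕ, ∀ a b : ℝ, α ≤ a → a ≤ b → b ≤ β →
      (hcrit.toFinset.filter (· ∈ Set.Ioo a b)).card ≤ n →
      (∃ L : ℝ, Filter.Tendsto (LevelMinAux.G β M a b)
          (nhdsWithin lam (Set.Iio lam)) (nhds L)) ∧
      (∃ L : ℝ, Filter.Tendsto (LevelMinAux.G β M a b)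
          (nhdsWithin lam (Set.Ioi lam)) (nhds L)) := by
    intro n
    induction n with
    | zero =>
      intro a b hαa hab' hbβ hcard
      refine LevelMinAux.base hab' hM ?_ lam
      intro x hx hx0
      have hmem : x ∈ hcrit.toFinset.filter (· ∈ Set.Ioo a b) := by
        rw [Finset.mem_filter, Set.Finite.mem_toFinset]
        exact ⟨⟨⟨hαa.trans hx.1.le, hx.2.le.trans hbβ⟩, hx0⟩, hx⟩
      have : 0 < (hcrit.toFinset.filter (· ∈ Set.Ioo a b)).card :=
        Finset.card_pos.2 ⟨x, hmem⟩
      omega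
    | succ n ih =>
      intro a b hαa hab' hbβ hcard
      by_cases hc : ∃ c ∈ Set.Ioo a b, deriv M c = 0
      · obtain ⟨c, hcmem, hc0⟩ := hc
        have hmemc : c ∈ hcrit.toFinset.filter (· ∈ Set.Ioo a b) := by
          rw [Finset.mem_filter, Set.Finite.mem_toFinset]
          exact ⟨⟨⟨hαa.trans hcmem.1.le, hcmem.2.le.trans hbβ⟩, hc0⟩, hcmem⟩
        have hsub1 : hcrit.toFinset.filter (· ∈ Set.Ioo a c) ⊆
            (hcrit.toFinset.filter (· ∈ Set.Ioo a b)).erase c := by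
          intro x hx
          rw [Finset.mem_filter] at hx
          rw [Finset.mem_erase, Finset.mem_filter]
          exact ⟨ne_of_lt hx.2.2, hx.1, hx.2.1, hx.2.2.trans hcmem.2⟩
        have hsub2 : hcrit.toFinset.filter (· ∈ Set.Ioo c b) ⊆
            (hcrit.toFinset.filter (· ∈ Set.Ioo a b)).erase c := by
          intro x hx
          rw [Finset.mem_filter] at hx
          rw [Finset.mem_erase, Finset.mem_filter]
          exact ⟨(ne_of_lt hx.2.1).symm, hx.1, hcmem.1.trans hx.2.1, hx.2.2⟩
        have hcard' : ((hcrit.toFinset.filter (· ∈ Set.Ioo a b)).erase c).card ≤ n := by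
          have h1 := Finset.card_erase_of_mem hmemc
          have h2 : 0 < (hcrit.toFinset.filter (· ∈ Set.Ioo a b)).card :=
            Finset.card_pos.2 ⟨c, hmemc⟩
          omega
        obtain ⟨⟨L1, hL1⟩, ⟨L1', hL1'⟩⟩ := ih a c hαa hcmem.1.le (hcmem.2.le.trans hbβ)
          ((Finset.card_le_card hsub1).trans hcard')
        obtain ⟨⟨L2, hL2⟩, ⟨L2', hL2'⟩⟩ := ih c b (hαa.trans hcmem.1.le) hcmem.2.le hbβ
          ((Finset.card_le_card hsub2).trans hcard')
        have hfun : LevelMinAux.G β M a b =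
            fun l => min (LevelMinAux.G β M a c l) (LevelMinAux.G β M c b l) :=
          funext fun l => LevelMinAux.G_split hcmem.1.le hcmem.2.le l
        rw [hfun]
        exact ⟨⟨_, hL1.min hL2⟩, ⟨_, hL1'.min hL2'⟩⟩
      · push_neg at hc
        exact LevelMinAux.base hab' hM hc lam
  have hfe : levelMin α β M = LevelMinAux.G β M α β :=
    funext fun l => levelMin_eq_G α β M l
  rw [hfe]
  exact key _ α β le_rfl hab le_rfl le_rfl
end
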